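/- Let κ be an infinite cardinal and θ > κ a regular cardinal such that for all α < θ, sup over ρ < κ of α^ρ is less than θ. Then any indexed family {A_i}_{i ∈ I} of sets with |I| ≥ θ and |A_i| < κ for all i contains a subfamily of size θ forming a Δ-system (i.e., there is a root r such that A_i ∩ A_j = r for all distinct indices i, j in the subfamily). -/

import Mathlib

universe u

open Cardinal

private lemma DS.bdd {θ : Cardinal.{u}} (hθ : θ.IsRegular) (s : Set θ.ord.ToType)
    (h : Cardinal.mk s < θ) : ∃ b, ∀ x ∈ s, x < b := by
  haveI : IsWellOrder θ.ord.ToType (· < ·) := isWellOrder_lt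
  have hb : Set.Bounded ((· < ·) : θ.ord.ToType → θ.ord.ToType → Prop) s :=
    by
      by_contra hnb
      have hc : IsCofinal s := fun a => by
        by_contra ha; push_neg at ha; exact hnb ⟨a, ha⟩
      have := Order.cof_le hc
      rw [Ordinal.cof_toType, hθ.cof_eq] at this
      exact absurd h (not_lt.mpr this)
  exact hb

private lemma DS.pigeon {θ : Cardinal.{u}} (hθ : θ.IsRegular) {σ β : Type u}
    (hσ : θ ≤ #σ) (f : σ → β) (hβ : #β < θ) : ∃ b, θ ≤ #(f ⁻¹' {b}) := by
  by_contra h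
  push_neg at h
  have huniv : ⋃ b, f ⁻¹' {b} = Set.univ := by ext x; simp
  have hle : #σ ≤ Cardinal.sum fun b => #(f ⁻¹' {b}) := by
    calc #σ = #(Set.univ : Set σ) := mk_univ.symm
      _ = #(⋃ b, f ⁻¹' {b}) := by rw [huniv]
      _ ≤ _ := mk_iUnion_le_sum_mk
  exact absurd (hσ.trans hle) (not_le.mpr (sum_lt_of_isRegular hθ hβ h))

private lemma DS.count {κ θ : Cardinal.{u}} (hκ : ℵ₀ ≤ κ) (hκθ : κ < θ)
    (hpow : ∀ c : Cardinal.{u}, c < θ → (⨆ ρ : Set.Iio κ, c ^ (ρ : Cardinal.{u})) < θ)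
    {X : Type u} (hX : #X < θ) : #{s : Set X // #s < κ} < θ := by
  classical
  set c := max (#X) κ with hc
  have hc0 : c ≠ 0 := by
    have : (0:Cardinal) < κ := lt_of_lt_of_le aleph0_pos hκ
    exact (lt_of_lt_of_le this (le_max_right _ _)).ne'
  have hcθ : c < θ := max_lt hX hκθ
  have hbdd : BddAbove (Set.range fun ρ : Set.Iio κ => c ^ (ρ : Cardinal.{u})) := by
    refine ⟨c ^ κ, ?_⟩
    rintro x ⟨ρ, rfl⟩
    exact power_le_power_left hc0 ρ.2.le
  set M := ⨆ ρ : Set.Iio κ, c ^ (ρ : Cardinal.{u}) with hM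
  have hκM : κ ≤ M := by
    have h1 : (1:Cardinal) < κ := lt_of_lt_of_le one_lt_aleph0 hκ
    calc κ ≤ c := le_max_right _ _
      _ = c ^ (1:Cardinal) := (power_one c).symm
      _ ≤ M := le_ciSup hbdd ⟨1, h1⟩
  have hMθ : M < θ := hpow c hcθ
  set K := κ.ord.ToType with hK
  haveI : IsWellOrder K (· < ·) := isWellOrder_lt
  have hKκ : #K = κ := by rw [hK, Cardinal.mk_toType, card_ord]
  -- for each small subset `s`, find `w : K` with an equiv from `Iio w` onto `s`
  have hF : ∀ s : {s : Set X // #s < κ}, ∃ w : K, Nonempty ({y : K // y < w} ≃ s.1) := by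
    intro s
    refine ⟨(Ordinal.ToType.mk (o := κ.ord)) ⟨(#s.1).ord, ?_⟩, ?_⟩
    · exact ord_lt_ord.mpr s.2
    · rw [← Cardinal.eq]
      set w := (Ordinal.ToType.mk (o := κ.ord)) ⟨(#s.1).ord, ord_lt_ord.mpr s.2⟩ with hw
      have htypein : Ordinal.typein (α := K) (· < ·) w = (#s.1).ord := by
        have := (Ordinal.ToType.mk (o := κ.ord)).symm_apply_apply ⟨(#s.1).ord, ord_lt_ord.mpr s.2⟩
        exact congrArg Subtype.val this
      calc #{y : K // y < w} = (Ordinal.typein (α := K) (· < ·) w).card :=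
            Ordinal.card_typein w
        _ = #s.1 := by rw [htypein, card_ord]
  choose w hw using hF
  let F : {s : Set X // #s < κ} → Σ v : K, ({y : K // y < v} → X) :=
    fun s => ⟨w s, fun y => ((hw s).some y : X)⟩
  have hrange : ∀ s, (s.1 : Set X) = Set.range (F s).2 := by
    intro s
    have : Set.range (F s).2 = Subtype.val '' Set.range ((hw s).some) := by
      rw [← Set.range_comp]; rfl
    rw [this, Equiv.range_eq_univ, Set.image_univ, Subtype.range_coe]
  have hFinj : Function.Injective F := by
    intro s t h
    apply Subtype.ext
    rw [hrange s, hrange t, h]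
  have h1 : #{s : Set X // #s < κ} ≤ #(Σ v : K, ({y : K // y < v} → X)) :=
    mk_le_of_injective hFinj
  have h2 : #(Σ v : K, ({y : K // y < v} → X)) ≤ κ * M := by
    rw [mk_sigma]
    calc (Cardinal.sum fun v : K => #({y : K // y < v} → X))
        ≤ Cardinal.sum fun _ : K => M := by
          refine sum_le_sum _ _ fun v => ?_
          have hv : #{y : K // y < v} < κ := by
            calc #{y : K // y < v} = (Ordinal.typein (α := K) (· < ·) v).card :=
                  Ordinal.card_typein v
              _ < κ := Cardinal.card_typein_toType_lt κ v
          calc #({y : K // y < v} → X) = #X ^ #{y : K // y < v} := (power_def X _).symm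
            _ ≤ c ^ (#{y : K // y < v}) := power_le_power_right (le_max_left _ _)
            _ ≤ M := le_ciSup hbdd ⟨#{y : K // y < v}, hv⟩
      _ = #K * M := sum_const' K M
      _ = κ * M := by rw [hKκ]
  have h3 : κ * M ≤ M := by
    calc κ * M ≤ M * M := mul_le_mul' hκM le_rfl
      _ = M := mul_eq_self (hκ.trans hκM)
  exact lt_of_le_of_lt (h1.trans (h2.trans h3)) hMθ

/-- The Δ-system lemma: if `κ` is infinite, `θ > κ` is regular, and `α^{<κ} < θ` for
all `α < θ`, then any family of `≥ θ` many sets each of size `< κ` has a subfamily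
of size `θ` forming a Δ-system. -/
theorem delta_system_lemma {α ι : Type u} (κ θ : Cardinal.{u})
    (hκ : ℵ₀ ≤ κ) (hθ : θ.IsRegular) (hκθ : κ < θ)
    (hpow : ∀ c : Cardinal.{u}, c < θ → (⨆ ρ : Set.Iio κ, c ^ (ρ : Cardinal.{u})) < θ)
    (A : ι → Set α) (hι : θ ≤ Cardinal.mk ι)
    (hA : ∀ i, Cardinal.mk (A i) < κ) :
    ∃ (t : Set ι) (r : Set α), Cardinal.mk t = θ ∧
      ∀ i ∈ t, ∀ j ∈ t, i ≠ j → A i ∩ A j = r := by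
  classical
  obtain ⟨I₀, hI₀⟩ := Cardinal.le_mk_iff_exists_set.mp hι
  set O := θ.ord.ToType with hO
  haveI : IsWellOrder O (· < ·) := isWellOrder_lt
  have hθ0 : ℵ₀ ≤ θ := hθ.aleph0_le
  have hmkO : #O = θ := by rw [hO, Cardinal.mk_toType, card_ord]
  have hI₀ne : Nonempty I₀ := by
    rw [← Cardinal.mk_ne_zero_iff, hI₀]
    exact (aleph0_pos.trans_le hθ0).ne'
  set U : Set α := ⋃ i ∈ I₀, A i with hU
  have hUθ : #U ≤ θ := by
    calc #U ≤ #I₀ * ⨆ i : I₀, #(A i.1) := Cardinal.mk_biUnion_le A I₀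
      _ ≤ θ * κ := by
          rw [hI₀]
          exact mul_le_mul' le_rfl (ciSup_le' fun i => (hA i.1).le)
      _ ≤ θ := by
          rw [mul_eq_max hθ0 hκ]
          exact max_le le_rfl hκθ.le
  obtain ⟨e⟩ : Nonempty (U ↪ O) := by
    rw [← Cardinal.le_def, hmkO]; exact hUθ
  set B : ι → Set O := fun i => e '' {x : U | (x : α) ∈ A i} with hB
  have hBκ : ∀ i, #(B i) < κ := by
    intro i
    calc #(B i) = #({x : U | (x : α) ∈ A i}) := Cardinal.mk_image_eq e.injective
      _ ≤ #(A i) := Cardinal.mk_preimage_of_injective _ _ Subtype.val_injective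
      _ < κ := hA i
  have hbdd : ∀ s : Set O, #s < θ → ∃ b : O, ∀ x ∈ s, x < b := fun s h => DS.bdd hθ s h
  -- Step 1: find γ such that for every b, θ many sets avoid [γ, b)
  have step1 : ∃ γ : O, ∀ b : O, θ ≤ #{i : ι | i ∈ I₀ ∧ B i ∩ Set.Ico γ b = ∅} := by
    by_contra hcon
    push_neg at hcon
    choose g₀ hg₀ using hcon
    have hg : ∀ γ : O, ∃ b : O, γ < b ∧ #{i : ι | i ∈ I₀ ∧ B i ∩ Set.Ico γ b = ∅} < θ := by
      intro γ
      obtain ⟨b, hb1⟩ := hbdd {γ, g₀ γ} ((Set.toFinite _).lt_aleph0.trans_le hθ0)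
      refine ⟨b, hb1 γ (by simp), ?_⟩
      refine lt_of_le_of_lt (Cardinal.mk_le_mk_of_subset ?_) (hg₀ γ)
      rintro i ⟨hi1, hi2⟩
      refine ⟨hi1, Set.eq_empty_of_subset_empty ?_⟩
      rintro x ⟨hx1, hx2, hx3⟩
      rw [← hi2]
      exact ⟨hx1, hx2, hx3.trans (hb1 (g₀ γ) (by simp))⟩
    choose g hg1 hg2 using hg
    set K := κ.ord.ToType with hK
    haveI : IsWellOrder K (· < ·) := isWellOrder_lt
    have hKκ : #K = κ := by rw [hK, Cardinal.mk_toType, card_ord]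
    have hsmall : ∀ ξ : K, #{ξ' : K // ξ' < ξ} < θ := by
      intro ξ
      calc #{ξ' : K // ξ' < ξ} = (Ordinal.typein (α := K) (· < ·) ξ).card :=
            Ordinal.card_typein ξ
        _ < κ := Cardinal.card_typein_toType_lt κ ξ
        _ < θ := hκθ
    have wf : WellFounded ((· < ·) : K → K → Prop) := wellFounded_lt
    have hFex : ∀ (ξ : K) (ih : ∀ ξ' : K, ξ' < ξ → O), ∃ b : O,
        ∀ ξ' : K, ∀ h : ξ' < ξ, g (ih ξ' h) < b := by
      intro ξ ih
      obtain ⟨b, hb⟩ := hbdd (Set.range fun p : {ξ' : K // ξ' < ξ} => g (ih p.1 p.2))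
        (Cardinal.mk_range_le.trans_lt (hsmall ξ))
      exact ⟨b, fun ξ' h => hb _ ⟨⟨ξ', h⟩, rfl⟩⟩
    set seq : K → O := WellFounded.fix wf (fun ξ ih => Classical.choose (hFex ξ ih)) with hseq
    have hseqlt : ∀ ξ ξ' : K, ξ' < ξ → g (seq ξ') < seq ξ := by
      intro ξ ξ' h
      have heq : seq ξ = Classical.choose (hFex ξ fun ξ'' _ => seq ξ'') :=
        WellFounded.fix_eq wf _ ξ
      rw [heq]
      exact Classical.choose_spec (hFex ξ fun ξ'' _ => seq ξ'') ξ' h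
    set E : K → Set ι := fun ξ => {i | i ∈ I₀ ∧ B i ∩ Set.Ico (seq ξ) (g (seq ξ)) = ∅} with hE
    have hEθ : ∀ ξ, #(E ξ) < θ := fun ξ => hg2 (seq ξ)
    have hUE : #(⋃ ξ, E ξ) < θ :=
      lt_of_le_of_lt Cardinal.mk_iUnion_le_sum_mk
        (Cardinal.sum_lt_of_isRegular hθ (by rw [hKκ]; exact hκθ) hEθ)
    have hiex : ∃ i ∈ I₀, i ∉ ⋃ ξ, E ξ := by
      by_contra hx
      push_neg at hx
      exact absurd (hI₀ ▸ Cardinal.mk_le_mk_of_subset hx) (not_le.mpr hUE)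
    obtain ⟨i, hiI, hiE⟩ := hiex
    have hne : ∀ ξ : K, (B i ∩ Set.Ico (seq ξ) (g (seq ξ))).Nonempty := by
      intro ξ
      rw [Set.nonempty_iff_ne_empty]
      intro h0
      exact hiE (Set.mem_iUnion.mpr ⟨ξ, ⟨hiI, h0⟩⟩)
    choose x hx using hne
    have hinj : Function.Injective x := by
      intro ξ ξ' hxx
      rcases lt_trichotomy ξ ξ' with h | h | h
      · have : x ξ < x ξ' :=
          lt_of_lt_of_le (hx ξ).2.2 ((hseqlt ξ' ξ h).le.trans (hx ξ').2.1)
        exact absurd hxx this.ne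
      · exact h
      · have : x ξ' < x ξ :=
          lt_of_lt_of_le (hx ξ').2.2 ((hseqlt ξ ξ' h).le.trans (hx ξ).2.1)
        exact absurd hxx this.ne'
    have : κ ≤ #(B i) := by
      rw [← hKκ]
      exact Cardinal.mk_le_of_injective (f := fun ξ : K => (⟨x ξ, (hx ξ).1⟩ : B i))
        fun a b hab => hinj (congrArg Subtype.val hab)
    exact absurd this (not_le.mpr (hBκ i))
  obtain ⟨γ, hγ⟩ := step1
  -- Step 2: Zorn's lemma gives θ many sets with pairwise intersections below γ
  set L : Set O := Set.Iio γ with hL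
  set 𝒮 : Set (Set ι) :=
    {S | S ⊆ I₀ ∧ ∀ i ∈ S, ∀ j ∈ S, i ≠ j → (B i \ L) ∩ (B j \ L) = ∅} with h𝒮
  obtain ⟨S, hS𝒮, hSmax⟩ : ∃ S ∈ 𝒮, ∀ S' ∈ 𝒮, S ⊆ S' → S' = S := by
    have hzorn : ∀ c ⊆ 𝒮, IsChain (· ⊆ ·) c → ∃ ub ∈ 𝒮, ∀ s ∈ c, s ⊆ ub := by
      intro c hc hchain
      refine ⟨⋃₀ c, ⟨?_, ?_⟩, fun s hs => Set.subset_sUnion_of_mem hs⟩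
      · exact Set.sUnion_subset fun s hs => (hc hs).1
      · intro i hi j hj hij
        obtain ⟨s₁, hs₁, hi⟩ := Set.mem_sUnion.mp hi
        obtain ⟨s₂, hs₂, hj⟩ := Set.mem_sUnion.mp hj
        rcases hchain.total hs₁ hs₂ with h | h
        · exact (hc hs₂).2 i (h hi) j hj hij
        · exact (hc hs₁).2 i hi j (h hj) hij
    obtain ⟨m, hm⟩ := zorn_subset 𝒮 hzorn
    exact ⟨m, hm.1, fun S' h h' => subset_antisymm (hm.2 h h') h'⟩
  have hSI₀ : S ⊆ I₀ := hS𝒮.1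
  have hSθ : θ ≤ #S := by
    by_contra hS
    push_neg at hS
    have hV : #(⋃ j ∈ S, B j) < θ := by
      rw [Set.biUnion_eq_iUnion]
      exact lt_of_le_of_lt Cardinal.mk_iUnion_le_sum_mk
        (Cardinal.sum_lt_of_isRegular hθ hS fun j => (hBκ j.1).trans hκθ)
    obtain ⟨b₀, hb₀⟩ := hbdd _ hV
    obtain ⟨b₁, hb₁⟩ := hbdd {γ, b₀} ((Set.toFinite _).lt_aleph0.trans_le hθ0)
    have hγb₁ : γ < b₁ := hb₁ γ (by simp)
    have hb₀b₁ : b₀ < b₁ := hb₁ b₀ (by simp)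
    have hiex : ∃ i, (i ∈ I₀ ∧ B i ∩ Set.Ico γ b₁ = ∅) ∧ i ∉ S := by
      by_contra hx
      push_neg at hx
      have hsub : {i : ι | i ∈ I₀ ∧ B i ∩ Set.Ico γ b₁ = ∅} ⊆ S := fun i hi => hx i hi
      exact absurd ((hγ b₁).trans (Cardinal.mk_le_mk_of_subset hsub)) (not_le.mpr hS)
    obtain ⟨i, ⟨hiI, hiIco⟩, hiS⟩ := hiex
    have key : ∀ j ∈ S, (B i \ L) ∩ (B j \ L) = ∅ := by
      intro j hj
      rw [Set.eq_empty_iff_forall_notMem]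
      rintro z ⟨⟨hzi, hzL⟩, ⟨hzj, -⟩⟩
      have hzγ : γ ≤ z := not_lt.mp hzL
      have hzb : z < b₁ := (hb₀ z (Set.mem_biUnion hj hzj)).trans hb₀b₁
      have hmem : z ∈ B i ∩ Set.Ico γ b₁ := ⟨hzi, hzγ, hzb⟩
      rw [hiIco] at hmem
      exact (Set.notMem_empty z) hmem
    have hins : insert i S ∈ 𝒮 := by
      refine ⟨Set.insert_subset hiI hSI₀, ?_⟩
      intro p hp q hq hpq
      rcases Set.mem_insert_iff.mp hp with rfl | hp'
      · rcases Set.mem_insert_iff.mp hq with rfl | hq'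
        · exact absurd rfl hpq
        · exact key q hq'
      · rcases Set.mem_insert_iff.mp hq with rfl | hq'
        · rw [Set.inter_comm]; exact key p hp'
        · exact hS𝒮.2 p hp' q hq' hpq
    have heqS := hSmax _ hins (Set.subset_insert i S)
    exact hiS (heqS ▸ Set.mem_insert i S)
  -- Step 3: pigeonhole on the heads
  have hLθ : #L < θ := Cardinal.mk_Iio_ord_toType γ
  have hcount : #{s : Set ↥L // #s < κ} < θ := DS.count hκ hκθ hpow hLθ
  set hd : S → {s : Set ↥L // #s < κ} := fun j =>
    ⟨Subtype.val ⁻¹' (B j.1),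
      lt_of_le_of_lt (Cardinal.mk_preimage_of_injective _ _ Subtype.val_injective) (hBκ j.1)⟩
    with hhd
  obtain ⟨s₀, hs₀⟩ := DS.pigeon hθ hSθ hd hcount
  set T₀ : Set ι := Subtype.val '' (hd ⁻¹' {s₀}) with hT₀def
  have hT₀ : θ ≤ #T₀ := by
    rw [hT₀def, Cardinal.mk_image_eq Subtype.val_injective]; exact hs₀
  obtain ⟨T, hTsub, hT⟩ := Cardinal.le_mk_iff_exists_subset.mp hT₀
  set r' : Set O := Subtype.val '' s₀.1 with hr'
  have hhead : ∀ j ∈ T, B j ∩ L = r' := by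
    intro j hj
    obtain ⟨j', hj', rfl⟩ := hTsub hj
    have hpre : Subtype.val ⁻¹' (B j'.1) = s₀.1 :=
      congrArg Subtype.val (Set.mem_singleton_iff.mp hj')
    calc B j'.1 ∩ L = Subtype.val '' (Subtype.val ⁻¹' (B j'.1)) := by
          rw [Set.image_preimage_eq_inter_range, Subtype.range_coe]
      _ = r' := by rw [hpre]
  have hTS : ∀ j ∈ T, j ∈ S := by
    intro j hj
    obtain ⟨j', _, rfl⟩ := hTsub hj
    exact j'.2
  have hBpair : ∀ p ∈ T, ∀ q ∈ T, p ≠ q → B p ∩ B q = r' := by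
    intro p hp q hq hpq
    have h1 := hhead p hp
    have h2 := hhead q hq
    have hdisj := hS𝒮.2 p (hTS p hp) q (hTS q hq) hpq
    ext z
    constructor
    · rintro ⟨hzp, hzq⟩
      have hzL : z ∈ L := by
        by_contra hzL
        have : z ∈ (B p \ L) ∩ (B q \ L) := ⟨⟨hzp, hzL⟩, ⟨hzq, hzL⟩⟩
        rw [hdisj] at this
        exact (Set.notMem_empty z) this
      rw [← h1]
      exact ⟨hzp, hzL⟩
    · intro hz
      have hz1 : z ∈ B p ∩ L := h1.symm ▸ hz
      have hz2 : z ∈ B q ∩ L := h2.symm ▸ hz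
      exact ⟨hz1.1, hz2.1⟩
  -- conclusion: pull the root back to α
  refine ⟨T, {a : α | ∃ h : a ∈ U, e ⟨a, h⟩ ∈ r'}, hT, ?_⟩
  intro p hp q hq hpq
  have hBpq := hBpair p hp q hq hpq
  have hpI : p ∈ I₀ := hSI₀ (hTS p hp)
  ext a
  constructor
  · rintro ⟨hap, haq⟩
    have haU : a ∈ U := Set.mem_biUnion hpI hap
    refine ⟨haU, ?_⟩
    rw [← hBpq]
    exact ⟨Set.mem_image_of_mem e (show (⟨a, haU⟩ : U) ∈ {x : U | (x : α) ∈ A p} from hap),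
      Set.mem_image_of_mem e (show (⟨a, haU⟩ : U) ∈ {x : U | (x : α) ∈ A q} from haq)⟩
  · rintro ⟨haU, har⟩
    rw [← hBpq] at har
    obtain ⟨⟨x₁, hx₁, hex₁⟩, ⟨x₂, hx₂, hex₂⟩⟩ := har
    have e1 : x₁ = ⟨a, haU⟩ := e.injective hex₁
    have e2 : x₂ = ⟨a, haU⟩ := e.injective hex₂
    exact ⟨by rw [e1] at hx₁; exact hx₁, by rw [e2] at hx₂; exact hx₂⟩
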